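/- Let (G,Λ) be a self-similar k-graph and μ ∈ Λ. A collection C of idempotents in J_{ι_μ} is a cover for ι_μ (i.e., every nonzero E ≤ ι_μ intersects some element of C) if and only if the set Ω_C = {τ : (μτ,e_G,μτ) ∈ ⋃_{E∈C} E} is exhaustive in s(μ)Λ, meaning that for every λ ∈ s(μ)Λ there is τ ∈ Ω_C with Λ^min(λ,τ) ≠ ∅. -/

import Mathlib

/-- A `k`-graph: a countable small category with degree functor to `ℕ^k`
satisfying the unique factorization property.  Objects (vertices) are
identified with the paths of degree `0`. -/
structure KGraph (k : ℕ) where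
  Path : Type
  countable : Countable Path
  src : Path → Path
  rng : Path → Path
  deg : Path → Fin k → ℕ
  comp : (μ ν : Path) → src μ = rng ν → Path
  deg_src : ∀ μ, deg (src μ) = 0
  deg_rng : ∀ μ, deg (rng μ) = 0
  src_vtx : ∀ μ, deg μ = 0 → src μ = μ
  rng_vtx : ∀ μ, deg μ = 0 → rng μ = μ
  src_comp : ∀ μ ν h, src (comp μ ν h) = src ν
  rng_comp : ∀ μ ν h, rng (comp μ ν h) = rng μ
  deg_comp : ∀ μ ν h, deg (comp μ ν h) = deg μ + deg ν
  comp_assoc : ∀ μ ν ρ (h1 : src μ = rng ν) (h2 : src (comp μ ν h1) = rng ρ)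
    (h3 : src ν = rng ρ) (h4 : src μ = rng (comp ν ρ h3)),
    comp (comp μ ν h1) ρ h2 = comp μ (comp ν ρ h3) h4
  rng_id_comp : ∀ μ (h : src (rng μ) = rng μ), comp (rng μ) μ h = μ
  comp_src_id : ∀ μ (h : src μ = rng (src μ)), comp μ (src μ) h = μ
  factor : ∀ μ (m n : Fin k → ℕ), deg μ = m + n →
    ∃! p : Path × Path, ∃ h : src p.1 = rng p.2,
      deg p.1 = m ∧ deg p.2 = n ∧ comp p.1 p.2 h = μ

namespace KGraph

variable {k : ℕ}

/-- The set `Λ^min(μ,ν)` of pairs `(α,β)` with `μα = νβ` a minimal common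
extension of `μ` and `ν`. -/
def lmin (Λ : KGraph k) (μ ν : Λ.Path) : Set (Λ.Path × Λ.Path) :=
  {p | ∃ (h1 : Λ.src μ = Λ.rng p.1) (h2 : Λ.src ν = Λ.rng p.2),
    Λ.comp μ p.1 h1 = Λ.comp ν p.2 h2 ∧
    Λ.deg μ + Λ.deg p.1 = Λ.deg μ ⊔ Λ.deg ν}

/-- `Λ` is finitely aligned when every `Λ^min(μ,ν)` is finite. -/
def FinitelyAligned (Λ : KGraph k) : Prop := ∀ μ ν : Λ.Path, (Λ.lmin μ ν).Finite

/-- `X ⊆ vΛ` is exhaustive: every path with range `v` has a minimal common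
extension with some member of `X`. -/
def Exhaustive (Λ : KGraph k) (v : Λ.Path) (X : Set Λ.Path) : Prop :=
  ∀ lam : Λ.Path, Λ.rng lam = v → ∃ τ ∈ X, Λ.lmin lam τ ≠ ∅

/-- `Λ` is row finite: finitely many edges of each colour into each vertex. -/
def RowFinite (Λ : KGraph k) : Prop :=
  ∀ v : Λ.Path, Λ.deg v = 0 → ∀ i : Fin k,
    {e : Λ.Path | Λ.deg e = Pi.single i 1 ∧ Λ.rng e = v}.Finite

/-- `Λ` has no sources: every vertex receives an edge of each colour. -/
def NoSources (Λ : KGraph k) : Prop :=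
  ∀ v : Λ.Path, Λ.deg v = 0 → ∀ i : Fin k,
    {e : Λ.Path | Λ.deg e = Pi.single i 1 ∧ Λ.rng e = v}.Nonempty

end KGraph

/-- A self-similar `k`-graph `(G,Λ,φ)`. -/
structure SelfSimilar (k : ℕ) (G : Type) [Group G] (Λ : KGraph k) where
  act : G → Λ.Path → Λ.Path
  φ : G → Λ.Path → G
  act_one : ∀ μ, act 1 μ = μ
  act_mul : ∀ g h μ, act (g * h) μ = act g (act h μ)
  deg_act : ∀ g μ, Λ.deg (act g μ) = Λ.deg μ
  src_act : ∀ g μ, Λ.src (act g μ) = act g (Λ.src μ)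
  rng_act : ∀ g μ, Λ.rng (act g μ) = act g (Λ.rng μ)
  φ_mul : ∀ g h μ, φ (g * h) μ = φ g (act h μ) * φ h μ
  act_comp : ∀ g μ ν (h : Λ.src μ = Λ.rng ν)
      (h' : Λ.src (act g μ) = Λ.rng (act (φ g μ) ν)),
      act g (Λ.comp μ ν h) = Λ.comp (act g μ) (act (φ g μ) ν) h'
  φ_comp : ∀ g μ ν (h : Λ.src μ = Λ.rng ν),
      φ g (Λ.comp μ ν h) = φ (φ g μ) ν
  φ_vtx : ∀ g v, Λ.deg v = 0 → φ g v = g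

variable {k : ℕ} {G : Type} [Group G] {Λ : KGraph k}

/-- Orthogonality of two triples: `Λ^min(μ,ξ) = Λ^min(ν,η) = ∅`. -/
def Orth (Λ : KGraph k) (t u : Λ.Path × G × Λ.Path) : Prop :=
  Λ.lmin t.1 u.1 = ∅ ∧ Λ.lmin t.2.2 u.2.2 = ∅

/-- Membership in `S_{G,Λ}`: a finite set of pairwise orthogonal triples
`(μ,g,ν)` with `s(μ) = g⬝s(ν)`. -/
def IsElem (SS : SelfSimilar k G Λ) (F : Set (Λ.Path × G × Λ.Path)) : Prop :=
  F.Finite ∧ (∀ t ∈ F, Λ.src t.1 = SS.act t.2.1 (Λ.src t.2.2)) ∧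
    ∀ t ∈ F, ∀ u ∈ F, t ≠ u → Orth Λ t u

/-- The multiplication of `S_{G,Λ}`. -/
def smul (SS : SelfSimilar k G Λ) (E F : Set (Λ.Path × G × Λ.Path)) :
    Set (Λ.Path × G × Λ.Path) :=
  {t | ∃ μ g ν ξ h η α β, (μ, g, ν) ∈ E ∧ (ξ, h, η) ∈ F ∧ (α, β) ∈ Λ.lmin ν ξ ∧
    ∃ (h1 : Λ.src μ = Λ.rng (SS.act g α)) (h2 : Λ.src η = Λ.rng (SS.act h⁻¹ β)),
      t = (Λ.comp μ (SS.act g α) h1,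
           SS.φ g α * SS.φ h (SS.act h⁻¹ β),
           Λ.comp η (SS.act h⁻¹ β) h2)}

/-- The involution `F* = {(ν,g⁻¹,μ) : (μ,g,ν) ∈ F}`. -/
def sstar (F : Set (Λ.Path × G × Λ.Path)) : Set (Λ.Path × G × Λ.Path) :=
  {t | (t.2.2, t.2.1⁻¹, t.1) ∈ F}

/-- The singleton idempotent `ι_μ = {(μ,e_G,μ)}`. -/
def iota (Λ : KGraph k) (G : Type) [Group G] (μ : Λ.Path) :
    Set (Λ.Path × G × Λ.Path) := {(μ, (1 : G), μ)}

/-- Idempotents of `S_{G,Λ}`. -/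
def IsIdem (SS : SelfSimilar k G Λ) (E : Set (Λ.Path × G × Λ.Path)) : Prop :=
  IsElem SS E ∧ smul SS E E = E

/-- The natural partial order of the inverse semigroup `S_{G,Λ}`:
`s ≤ t` iff `s = te` for some idempotent `e`. -/
def leS (SS : SelfSimilar k G Λ) (s t : Set (Λ.Path × G × Λ.Path)) : Prop :=
  ∃ E, IsIdem SS E ∧ smul SS t E = s

/-- `τ` is strongly fixed by `g`. -/
def StronglyFixed (SS : SelfSimilar k G Λ) (g : G) (τ : Λ.Path) : Prop :=
  SS.act g τ = τ ∧ SS.φ g τ = 1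

/-- The set `SF_g` of paths strongly fixed by `g`. -/
def SFg (SS : SelfSimilar k G Λ) (g : G) : Set Λ.Path :=
  {τ | SS.act g τ = τ ∧ SS.φ g τ = 1}

/-- `SF_g` is locally exhausted. -/
def LocallyExhausted (SS : SelfSimilar k G Λ) (g : G) : Prop :=
  ∀ v : Λ.Path, Λ.deg v = 0 →
    ∃ M : Set Λ.Path, M.Finite ∧ (∀ τ ∈ M, τ ∈ SFg SS g ∧ Λ.rng τ = v) ∧
      ∀ τ ∈ SFg SS g, Λ.rng τ = v → ∃ τ' ∈ M, Λ.lmin τ τ' ≠ ∅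

/-- The principal ideal `J_F` admits a finite cover. -/
def HasFiniteCover (SS : SelfSimilar k G Λ) (F : Set (Λ.Path × G × Λ.Path)) : Prop :=
  ∃ C : Set (Set (Λ.Path × G × Λ.Path)), C.Finite ∧
    (∀ E ∈ C, IsIdem SS E ∧ smul SS F E = E) ∧
    ∀ E, IsIdem SS E → smul SS F E = E → E ≠ ∅ → ∃ E' ∈ C, smul SS E E' ≠ ∅

/-- A (proper, nonzero) filter in the idempotent semilattice `E(S_{G,Λ})`. -/
def IsFilterE (SS : SelfSimilar k G Λ) (𝓕 : Set (Set (Λ.Path × G × Λ.Path))) : Prop :=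
  𝓕.Nonempty ∧ (∀ E ∈ 𝓕, IsIdem SS E) ∧ (∅ ∉ 𝓕) ∧
    (∀ E ∈ 𝓕, ∀ F ∈ 𝓕, smul SS E F ∈ 𝓕) ∧
    ∀ E ∈ 𝓕, ∀ F, IsIdem SS F → smul SS F E = E → F ∈ 𝓕

/-- An ultrafilter: a maximal filter in `E(S_{G,Λ})`. -/
def IsUltrafilterE (SS : SelfSimilar k G Λ) (𝓕 : Set (Set (Λ.Path × G × Λ.Path))) : Prop :=
  IsFilterE SS 𝓕 ∧ ∀ 𝓖, IsFilterE SS 𝓖 → 𝓕 ⊆ 𝓖 → 𝓖 = 𝓕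

/-- `n ≤ m` for `m ∈ (ℕ ∪ {∞})^k` and `n ∈ ℕ^k`. -/
def LeDeg {k : ℕ} (m : Fin k → ℕ∞) (n : Fin k → ℕ) : Prop :=
  ∀ i, (n i : ℕ∞) ≤ m i

/-- A boundary path `x` of a finitely aligned `k`-graph, recorded via its
degree `d(x) ∈ (ℕ∪{∞})^k` and its initial segments `x(0,n)` for `n ≤ d(x)`. -/
structure BoundaryPath (Λ : KGraph k) where
  bdeg : Fin k → ℕ∞
  seg : (Fin k → ℕ) → Λ.Path
  deg_seg : ∀ n, LeDeg bdeg n → Λ.deg (seg n) = n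
  rng_seg : ∀ n, LeDeg bdeg n → Λ.rng (seg n) = seg 0
  seg_comp : ∀ m n : Fin k → ℕ, LeDeg bdeg (m + n) →
    ∃ (τ : Λ.Path) (h : Λ.src (seg m) = Λ.rng τ),
      Λ.deg τ = n ∧ seg (m + n) = Λ.comp (seg m) τ h
  seg_junk : ∀ n, ¬ LeDeg bdeg n → seg n = seg 0
  boundary : ∀ n, LeDeg bdeg n → ∀ X : Set Λ.Path, X.Finite →
    (∀ τ ∈ X, Λ.rng τ = Λ.src (seg n) ∧ τ ≠ Λ.src (seg n)) →
    KGraph.Exhaustive Λ (Λ.src (seg n)) X →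
    ∃ τ ∈ X, ∃ (_ : LeDeg bdeg (n + Λ.deg τ)) (h : Λ.src (seg n) = Λ.rng τ),
      seg (n + Λ.deg τ) = Λ.comp (seg n) τ h

/-- `z = σ^n(x)`, the shift of the boundary path `x` by `n`. -/
def IsShift (Λ : KGraph k) (x : BoundaryPath Λ) (n : Fin k → ℕ)
    (z : BoundaryPath Λ) : Prop :=
  (∀ i, z.bdeg i = x.bdeg i - (n i : ℕ∞)) ∧
    ∀ p, LeDeg z.bdeg p → ∃ h : Λ.src (x.seg n) = Λ.rng (z.seg p),
      x.seg (n + p) = Λ.comp (x.seg n) (z.seg p) h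

/-- `z = g⬝x` for boundary paths. -/
def IsActB (SS : SelfSimilar k G Λ) (g : G) (x z : BoundaryPath Λ) : Prop :=
  z.bdeg = x.bdeg ∧ ∀ p, LeDeg x.bdeg p → z.seg p = SS.act g (x.seg p)

/-- `y = lam⬝z`, the concatenation of a finite path with a boundary path. -/
def IsCompB (Λ : KGraph k) (lam : Λ.Path) (z y : BoundaryPath Λ) : Prop :=
  (∀ i, y.bdeg i = (Λ.deg lam i : ℕ∞) + z.bdeg i) ∧
    ∀ p, LeDeg z.bdeg p → ∃ h : Λ.src lam = Λ.rng (z.seg p),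
      y.seg (Λ.deg lam + p) = Λ.comp lam (z.seg p) h

/-- `x ∈ Z(lam)`, i.e. `x(0,d(lam)) = lam`. -/
def InZ (Λ : KGraph k) (x : BoundaryPath Λ) (lam : Λ.Path) : Prop :=
  LeDeg x.bdeg (Λ.deg lam) ∧ x.seg (Λ.deg lam) = lam

/-- `y` is a fixed point for `θ_{{(μ,g,ν)}}`: `y ∈ Z(ν)` and `μ(g⬝σ^{d(ν)}(y)) = y`. -/
def FixedPt (SS : SelfSimilar k G Λ) (μ : Λ.Path) (g : G) (ν : Λ.Path)
    (y : BoundaryPath Λ) : Prop :=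
  InZ Λ y ν ∧ ∃ z w, IsShift Λ y (Λ.deg ν) z ∧ IsActB SS g z w ∧ IsCompB Λ μ w y

/-- `y` is an interior fixed point for `θ_{{(μ,g,ν)}}`: some cylinder containing
`y` consists entirely of fixed points. -/
def InteriorFixedPt (SS : SelfSimilar k G Λ) (μ : Λ.Path) (g : G) (ν : Λ.Path)
    (y : BoundaryPath Λ) : Prop :=
  ∃ η : Λ.Path, InZ Λ y η ∧ ∀ y', InZ Λ y' η → FixedPt SS μ g ν y'

/-- `G`-aperiodic condition (A). -/
def CondA (SS : SelfSimilar k G Λ) : Prop :=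
  ∀ v : Λ.Path, Λ.deg v = 0 → ∃ x : BoundaryPath Λ, x.seg 0 = v ∧
    ∀ (m n : Fin k → ℕ), LeDeg x.bdeg m → LeDeg x.bdeg n →
      ∀ (g : G) (z w : BoundaryPath Λ),
        IsShift Λ x m z → IsShift Λ x n w → IsActB SS g w z → m = n

/-- `(G,Λ)` is `G`-cofinal. -/
def GCofinal (SS : SelfSimilar k G Λ) : Prop :=
  ∀ v : Λ.Path, Λ.deg v = 0 → ∀ x : BoundaryPath Λ,
    ∃ n : Fin k → ℕ, LeDeg x.bdeg n ∧ ∃ (g : G) (p : Λ.Path),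
      Λ.rng p = v ∧ Λ.src p = SS.act g (Λ.src (x.seg n))

/-- The ultrafilter `F_x` associated to a boundary path `x`. -/
def Fx (SS : SelfSimilar k G Λ) (x : BoundaryPath Λ) :
    Set (Set (Λ.Path × G × Λ.Path)) :=
  {E | IsIdem SS E ∧ ∃ n : Fin k → ℕ, LeDeg x.bdeg n ∧
    (x.seg n, (1 : G), x.seg n) ∈ E}

section Aux

lemma phi_one (SS : SelfSimilar k G Λ) (μ : Λ.Path) : SS.φ 1 μ = 1 := by
  have h := SS.φ_mul 1 1 μ
  rw [one_mul, SS.act_one] at h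
  exact (right_eq_mul.mp h)

lemma comp_congr (Λ : KGraph k) (μ : Λ.Path) {x y : Λ.Path} (hxy : x = y)
    (hx : Λ.src μ = Λ.rng x) (hy : Λ.src μ = Λ.rng y) :
    Λ.comp μ x hx = Λ.comp μ y hy := by subst hxy; rfl

lemma comp_vtx (Λ : KGraph k) (μ x : Λ.Path) (h : Λ.src μ = Λ.rng x)
    (hx : Λ.deg x = 0) : Λ.comp μ x h = μ := by
  have hxv : x = Λ.src μ := by rw [h, Λ.rng_vtx x hx]
  subst hxv
  exact Λ.comp_src_id μ h

lemma comp_cancel (Λ : KGraph k) (μ x y : Λ.Path) (hx : Λ.src μ = Λ.rng x)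
    (hy : Λ.src μ = Λ.rng y) (hdeg : Λ.deg x = Λ.deg y)
    (h : Λ.comp μ x hx = Λ.comp μ y hy) : x = y := by
  obtain ⟨p, -, hun⟩ := Λ.factor (Λ.comp μ x hx) (Λ.deg μ) (Λ.deg x)
    (Λ.deg_comp μ x hx)
  have h1 := hun (μ, x) ⟨hx, rfl, rfl, rfl⟩
  have h2 := hun (μ, y) ⟨hy, rfl, hdeg.symm, h.symm⟩
  have := h1.trans h2.symm
  exact congrArg Prod.snd this

lemma add_sup_pi {a b c : Fin k → ℕ} : (a + b) ⊔ (a + c) = a + (b ⊔ c) := by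
  funext i
  simp only [Pi.sup_apply, Pi.add_apply]
  rcases le_total (b i) (c i) with h | h
  · rw [sup_eq_right.mpr h, sup_eq_right.mpr (by omega)]
  · rw [sup_eq_left.mpr h, sup_eq_left.mpr (by omega)]

/-- Structure of nonzero idempotents: every triple is `(τ, 1, τ)`. -/
lemma idem_struct (SS : SelfSimilar k G Λ) (E : Set (Λ.Path × G × Λ.Path))
    (hE : IsIdem SS E) : ∀ t ∈ E, t.1 = t.2.2 ∧ t.2.1 = 1 := by
  intro t htE
  have htm : t ∈ smul SS E E := hE.2.symm ▸ htE
  obtain ⟨μ₁, g₁, ν₁, ξ, h, η, α, β, h1E, h2E, hab, h1, h2, heq⟩ := htm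
  -- t = (μ₁, g₁, ν₁)
  have ht1 : t = (μ₁, g₁, ν₁) := by
    by_contra hne
    have horth := (hE.1.2.2) t htE (μ₁, g₁, ν₁) h1E hne
    have : (Λ.src t.1, SS.act g₁ α) ∈ Λ.lmin t.1 μ₁ := by
      have hd : Λ.deg t.1 = Λ.deg μ₁ + Λ.deg α := by
        rw [heq]; simp only
        rw [Λ.deg_comp, SS.deg_act]
      refine ⟨by rw [Λ.rng_vtx _ (Λ.deg_src t.1)], h1, ?_, ?_⟩
      · rw [Λ.comp_src_id t.1]
        rw [heq]
      · rw [Λ.deg_src, add_zero, eq_comm, sup_eq_left, hd]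
        exact le_self_add
    rw [horth.1] at this
    exact this
  -- t = (ξ, h, η)
  have ht2 : t = (ξ, h, η) := by
    by_contra hne
    have horth := (hE.1.2.2) t htE (ξ, h, η) h2E hne
    have : (Λ.src t.2.2, SS.act h⁻¹ β) ∈ Λ.lmin t.2.2 η := by
      have hd : Λ.deg t.2.2 = Λ.deg η + Λ.deg β := by
        rw [heq]; simp only
        rw [Λ.deg_comp, SS.deg_act]
      refine ⟨by rw [Λ.rng_vtx _ (Λ.deg_src t.2.2)], h2, ?_, ?_⟩
      · rw [Λ.comp_src_id t.2.2]
        rw [heq]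
      · rw [Λ.deg_src, add_zero, eq_comm, sup_eq_left, hd]
        exact le_self_add
    rw [horth.2] at this
    exact this
  have hξ : ξ = μ₁ := by rw [ht1] at ht2; exact (congrArg Prod.fst ht2).symm
  have hh : h = g₁ := by rw [ht1] at ht2; exact (congrArg (fun p => p.2.1) ht2).symm
  have hη : η = ν₁ := by rw [ht1] at ht2; exact (congrArg (fun p => p.2.2) ht2).symm
  subst hξ hh hη
  -- now (α, β) ∈ lmin ν₁ ξ with ξ = μ₁
  obtain ⟨hl1, hl2, hcomp, hdeg⟩ := hab
  -- deg α = 0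
  have hα0 : Λ.deg α = 0 := by
    have : Λ.deg t.1 = Λ.deg ξ + Λ.deg α := by
      rw [heq]; simp only; rw [Λ.deg_comp, SS.deg_act]
    rw [ht2] at this
    simp only at this
    exact (left_eq_add.mp this)
  have hβ0 : Λ.deg β = 0 := by
    have : Λ.deg t.2.2 = Λ.deg η + Λ.deg β := by
      rw [heq]; simp only; rw [Λ.deg_comp, SS.deg_act]
    rw [ht2] at this
    simp only at this
    exact (left_eq_add.mp this)
  -- ν₁ = ξ
  have hνξ : η = ξ := by
    have e1 : Λ.comp η α hl1 = η := comp_vtx Λ η α hl1 hα0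
    have e2 : Λ.comp ξ β hl2 = ξ := comp_vtx Λ ξ β hl2 hβ0
    rw [e1, e2] at hcomp; exact hcomp
  constructor
  · rw [ht2]; simp only; rw [hνξ]
  · rw [ht2]; simp only
    have hg : t.2.1 = SS.φ h α * SS.φ h (SS.act h⁻¹ β) := by
      rw [heq]
    have e1 : SS.φ h α = h := SS.φ_vtx h α hα0
    have e2 : SS.φ h (SS.act h⁻¹ β) = h := SS.φ_vtx h _ (by rw [SS.deg_act]; exact hβ0)
    rw [e1, e2, ht2] at hg
    simp only at hg
    exact right_eq_mul.mp hg

/-- Elements of idempotents below `ι_μ` have first component extending `μ`. -/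
lemma below_iota_ext (SS : SelfSimilar k G Λ) (μ : Λ.Path)
    (E : Set (Λ.Path × G × Λ.Path)) (hE : smul SS (iota Λ G μ) E = E) :
    ∀ t ∈ E, ∃ (τ : Λ.Path) (h : Λ.src μ = Λ.rng τ), t.1 = Λ.comp μ τ h := by
  intro t htE
  have htm : t ∈ smul SS (iota Λ G μ) E := hE.symm ▸ htE
  obtain ⟨μ₁, g₁, ν₁, ξ, h, η, α, β, h1E, h2E, hab, h1, h2, heq⟩ := htm
  have hι : μ₁ = μ ∧ g₁ = (1 : G) ∧ ν₁ = μ := by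
    have := h1E
    simp only [iota, Set.mem_singleton_iff, Prod.mk.injEq] at this
    exact ⟨this.1, this.2.1, this.2.2⟩
  obtain ⟨e1, e2, e3⟩ := hι
  subst e1 e2 e3
  exact ⟨SS.act 1 α, h1, by rw [heq]⟩

/-- Restriction: `Λ^min(μλ, μτ) ⊆ Λ^min(λ, τ)`. -/
lemma lmin_restrict (Λ : KGraph k) (μ lam τ : Λ.Path)
    (hl : Λ.src μ = Λ.rng lam) (hτ : Λ.src μ = Λ.rng τ) (α β : Λ.Path)
    (hab : (α, β) ∈ Λ.lmin (Λ.comp μ lam hl) (Λ.comp μ τ hτ)) :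
    (α, β) ∈ Λ.lmin lam τ := by
  obtain ⟨h1, h2, hcomp, hdeg⟩ := hab
  rw [Λ.src_comp] at h1 h2
  have hdeg' : Λ.deg lam + Λ.deg α = Λ.deg lam ⊔ Λ.deg τ := by
    have := hdeg
    rw [Λ.deg_comp, Λ.deg_comp, add_sup_pi, add_assoc] at this
    exact add_left_cancel this
  refine ⟨h1, h2, ?_, hdeg'⟩
  -- reassociate
  have ha1 : Λ.src lam = Λ.rng α := h1
  have e1 : Λ.comp (Λ.comp μ lam hl) α (by rw [Λ.src_comp]; exact h1) =
      Λ.comp μ (Λ.comp lam α h1) (by rw [Λ.rng_comp]; exact hl) :=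
    Λ.comp_assoc μ lam α hl _ h1 _
  have e2 : Λ.comp (Λ.comp μ τ hτ) β (by rw [Λ.src_comp]; exact h2) =
      Λ.comp μ (Λ.comp τ β h2) (by rw [Λ.rng_comp]; exact hτ) :=
    Λ.comp_assoc μ τ β hτ _ h2 _
  have hc : Λ.comp μ (Λ.comp lam α h1) (by rw [Λ.rng_comp]; exact hl) =
      Λ.comp μ (Λ.comp τ β h2) (by rw [Λ.rng_comp]; exact hτ) := by
    rw [← e1, ← e2]; exact hcomp
  have hdd : Λ.deg (Λ.comp lam α h1) = Λ.deg (Λ.comp τ β h2) := by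
    have := congrArg Λ.deg hc
    simp only [Λ.deg_comp] at this
    rw [Λ.deg_comp, Λ.deg_comp]
    exact add_left_cancel this
  exact comp_cancel Λ μ _ _ _ _ hdd hc

/-- Extension: `Λ^min(λ, τ) ⊆ Λ^min(μλ, μτ)`. -/
lemma lmin_extend (Λ : KGraph k) (μ lam τ : Λ.Path)
    (hl : Λ.src μ = Λ.rng lam) (hτ : Λ.src μ = Λ.rng τ) (α β : Λ.Path)
    (hab : (α, β) ∈ Λ.lmin lam τ) :
    (α, β) ∈ Λ.lmin (Λ.comp μ lam hl) (Λ.comp μ τ hτ) := by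
  obtain ⟨h1, h2, hcomp, hdeg⟩ := hab
  refine ⟨by rw [Λ.src_comp]; exact h1, by rw [Λ.src_comp]; exact h2, ?_, ?_⟩
  · have e1 : Λ.comp (Λ.comp μ lam hl) α (by rw [Λ.src_comp]; exact h1) =
        Λ.comp μ (Λ.comp lam α h1) (by rw [Λ.rng_comp]; exact hl) :=
      Λ.comp_assoc μ lam α hl _ h1 _
    have e2 : Λ.comp (Λ.comp μ τ hτ) β (by rw [Λ.src_comp]; exact h2) =
        Λ.comp μ (Λ.comp τ β h2) (by rw [Λ.rng_comp]; exact hτ) :=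
      Λ.comp_assoc μ τ β hτ _ h2 _
    rw [e1, e2]
    exact comp_congr Λ μ hcomp _ _
  · rw [Λ.deg_comp, Λ.deg_comp, add_sup_pi, add_assoc, hdeg]

end Aux

section Aux2

lemma singleton_idem (SS : SelfSimilar k G Λ) (ζ : Λ.Path) :
    IsIdem SS {(ζ, (1 : G), ζ)} := by
  have hsrc : Λ.src ζ = Λ.rng (Λ.src ζ) := (Λ.rng_vtx _ (Λ.deg_src ζ)).symm
  constructor
  · refine ⟨Set.finite_singleton _, ?_, ?_⟩
    · intro t ht
      rw [Set.mem_singleton_iff] at ht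
      subst ht
      simp only
      rw [SS.act_one]
    · intro t ht u hu hne
      rw [Set.mem_singleton_iff] at ht hu
      exact absurd (ht.trans hu.symm) hne
  · ext t
    constructor
    · rintro ⟨μ₁, g, ν, ξ, h, η, α, β, h1E, h2E, hab, h1, h2, heq⟩
      rw [Set.mem_singleton_iff, Prod.mk.injEq, Prod.mk.injEq] at h1E h2E
      obtain ⟨e1, e2, e3⟩ := h1E
      obtain ⟨f1, f2, f3⟩ := h2E
      replace e1 := e1.symm; subst e1
      replace e2 := e2.symm; subst e2
      replace e3 := e3.symm; subst e3
      replace f1 := f1.symm; subst f1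
      replace f2 := f2.symm; subst f2
      replace f3 := f3.symm; subst f3
      obtain ⟨hl1, hl2, hcomp, hdeg⟩ := hab
      have hα0 : Λ.deg α = 0 := by
        rw [sup_idem] at hdeg
        exact add_eq_left.mp hdeg
      have hβ0 : Λ.deg β = 0 := by
        have hdc := congrArg Λ.deg hcomp
        rw [Λ.deg_comp, Λ.deg_comp] at hdc
        have h2c := add_left_cancel hdc
        rw [← h2c]; exact hα0
      rw [Set.mem_singleton_iff, heq, Prod.mk.injEq, Prod.mk.injEq]
      refine ⟨comp_vtx Λ ζ _ h1 (by rw [SS.deg_act]; exact hα0), ?_,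
        comp_vtx Λ ζ _ h2 (by rw [SS.deg_act]; exact hβ0)⟩
      rw [phi_one, phi_one, one_mul]
    · intro ht
      rw [Set.mem_singleton_iff] at ht
      subst ht
      refine ⟨ζ, 1, ζ, ζ, 1, ζ, Λ.src ζ, Λ.src ζ, rfl, rfl,
        ⟨hsrc, hsrc, rfl, by rw [Λ.deg_src, add_zero, sup_idem]⟩,
        by rw [SS.act_one]; exact hsrc,
        by rw [inv_one, SS.act_one]; exact hsrc, ?_⟩
      rw [Prod.mk.injEq, Prod.mk.injEq]
      refine ⟨(comp_vtx Λ ζ _ _ (by rw [SS.deg_act, Λ.deg_src])).symm, ?_,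
        (comp_vtx Λ ζ _ _ (by rw [SS.deg_act, Λ.deg_src])).symm⟩
      rw [phi_one, phi_one, one_mul]

lemma singleton_below (SS : SelfSimilar k G Λ) (μ lam : Λ.Path)
    (hl : Λ.src μ = Λ.rng lam) :
    smul SS (iota Λ G μ) {(Λ.comp μ lam hl, (1 : G), Λ.comp μ lam hl)} =
      {(Λ.comp μ lam hl, (1 : G), Λ.comp μ lam hl)} := by
  have hdζ : Λ.deg (Λ.comp μ lam hl) = Λ.deg μ + Λ.deg lam := Λ.deg_comp μ lam hl
  ext t
  constructor
  · rintro ⟨μ₁, g, ν, ξ, h, η, α, β, h1E, h2E, hab, h1, h2, heq⟩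
    rw [iota, Set.mem_singleton_iff, Prod.mk.injEq, Prod.mk.injEq] at h1E
    rw [Set.mem_singleton_iff, Prod.mk.injEq, Prod.mk.injEq] at h2E
    obtain ⟨e1, e2, e3⟩ := h1E
    obtain ⟨f1, f2, f3⟩ := h2E
    replace e1 := e1.symm; subst e1
    replace e2 := e2.symm; subst e2
    replace e3 := e3.symm; subst e3
    replace f1 := f1.symm; subst f1
    replace f2 := f2.symm; subst f2
    replace f3 := f3.symm; subst f3
    obtain ⟨hl1, hl2, hcomp, hdeg⟩ := hab
    have hsupζ : Λ.deg μ ⊔ Λ.deg (Λ.comp μ lam hl) = Λ.deg (Λ.comp μ lam hl) :=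
      sup_eq_right.mpr (by rw [hdζ]; exact le_self_add)
    have hβ0 : Λ.deg β = 0 := by
      have hdc := congrArg Λ.deg hcomp
      rw [Λ.deg_comp, Λ.deg_comp] at hdc
      rw [hdeg, hsupζ] at hdc
      exact (left_eq_add.mp hdc)
    have hcβ : Λ.comp (Λ.comp μ lam hl) β hl2 = Λ.comp μ lam hl :=
      comp_vtx Λ _ β hl2 hβ0
    have hcc : Λ.comp μ α hl1 = Λ.comp μ lam hl := by rw [hcomp, hcβ]
    have hαlam : α = lam := by
      have hd2 : Λ.deg μ + Λ.deg α = Λ.deg μ + Λ.deg lam := by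
        have := congrArg Λ.deg hcc
        rw [Λ.deg_comp, Λ.deg_comp] at this; exact this
      exact comp_cancel Λ μ α lam hl1 hl (add_left_cancel hd2) hcc
    rw [Set.mem_singleton_iff, heq, Prod.mk.injEq, Prod.mk.injEq]
    refine ⟨?_, ?_, comp_vtx Λ _ _ h2 (by rw [SS.deg_act]; exact hβ0)⟩
    · exact comp_congr Λ μ ((SS.act_one α).trans hαlam) h1 hl
    · rw [phi_one, phi_one, one_mul]
  · intro ht
    rw [Set.mem_singleton_iff] at ht
    subst ht
    have hsrc : Λ.src (Λ.comp μ lam hl) = Λ.rng (Λ.src (Λ.comp μ lam hl)) :=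
      (Λ.rng_vtx _ (Λ.deg_src _)).symm
    refine ⟨μ, 1, μ, Λ.comp μ lam hl, 1, Λ.comp μ lam hl, lam, Λ.src (Λ.comp μ lam hl),
      rfl, rfl,
      ⟨hl, hsrc, (comp_vtx Λ _ _ hsrc (Λ.deg_src _)).symm,
        by show Λ.deg μ + Λ.deg lam = Λ.deg μ ⊔ Λ.deg (Λ.comp μ lam hl)
           rw [hdζ]; exact (sup_eq_right.mpr le_self_add).symm⟩,
      by rw [SS.act_one]; exact hl,
      by rw [inv_one, SS.act_one]; exact hsrc, ?_⟩
    rw [Prod.mk.injEq, Prod.mk.injEq]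
    refine ⟨(comp_congr Λ μ (SS.act_one lam) _ hl).symm, ?_,
      (comp_vtx Λ _ _ _ (by rw [SS.deg_act, Λ.deg_src])).symm⟩
    rw [phi_one, phi_one, one_mul]

end Aux2

/-- a collection `C ⊆ J_{ι_μ}` is a cover for `ι_μ` iff the set
`Ω_C = {τ : (μτ,e_G,μτ) ∈ ⋃ C}` is exhaustive in `s(μ)Λ`. -/
theorem stmt9 (SS : SelfSimilar k G Λ) (hfa : Λ.FinitelyAligned)
    (μ : Λ.Path) (C : Set (Set (Λ.Path × G × Λ.Path)))
    (hC : ∀ E ∈ C, IsIdem SS E ∧ smul SS (iota Λ G μ) E = E) :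
    ((∀ E, IsIdem SS E → smul SS (iota Λ G μ) E = E → E ≠ ∅ →
        ∃ E' ∈ C, smul SS E E' ≠ ∅) ↔
      (∀ lam : Λ.Path, Λ.rng lam = Λ.src μ →
        ∃ (τ : Λ.Path) (h : Λ.src μ = Λ.rng τ),
          (∃ E ∈ C, (Λ.comp μ τ h, (1 : G), Λ.comp μ τ h) ∈ E) ∧
          Λ.lmin lam τ ≠ ∅)) := by
  constructor
  · -- cover → exhaustive
    intro hcov lam hlam
    have hl : Λ.src μ = Λ.rng lam := hlam.symm
    have hidem := singleton_idem SS (Λ.comp μ lam hl)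
    have hbelow := singleton_below SS μ lam hl
    have hne : ({(Λ.comp μ lam hl, (1 : G), Λ.comp μ lam hl)} :
        Set (Λ.Path × G × Λ.Path)) ≠ ∅ := Set.singleton_ne_empty _
    obtain ⟨E', hE'C, hprod⟩ := hcov _ hidem hbelow hne
    obtain ⟨t, htm⟩ := Set.nonempty_iff_ne_empty.mpr hprod
    obtain ⟨μ₁, g, ν, ξ, h, η, α, β, h1E, h2E, hab, h1, h2, heq⟩ := htm
    rw [Set.mem_singleton_iff, Prod.mk.injEq, Prod.mk.injEq] at h1E
    obtain ⟨e1, e2, e3⟩ := h1E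
    replace e1 := e1.symm; subst e1
    replace e2 := e2.symm; subst e2
    replace e3 := e3.symm; subst e3
    obtain ⟨τ, hτ, hξ⟩ := below_iota_ext SS μ E' (hC E' hE'C).2 _ h2E
    have hdiag := idem_struct SS E' (hC E' hE'C).1 _ h2E
    simp only at hξ hdiag
    refine ⟨τ, hτ, ⟨E', hE'C, ?_⟩, ?_⟩
    · have hrw : (ξ, h, η) = (Λ.comp μ τ hτ, (1 : G), Λ.comp μ τ hτ) := by
        rw [Prod.mk.injEq, Prod.mk.injEq]
        exact ⟨hξ, hdiag.2, by rw [← hdiag.1]; exact hξ⟩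
      rw [← hrw]; exact h2E
    · rw [← Set.nonempty_iff_ne_empty]
      refine ⟨(α, β), lmin_restrict Λ μ lam τ hl hτ α β ?_⟩
      rw [← hξ]
      exact hab
  · -- exhaustive → cover
    intro hexh E hEidem hEbelow hEne
    obtain ⟨t, htE⟩ := Set.nonempty_iff_ne_empty.mpr hEne
    obtain ⟨τ0, h0, ht1⟩ := below_iota_ext SS μ E hEbelow t htE
    have hdiag := idem_struct SS E hEidem t htE
    obtain ⟨τ, hτ, ⟨E', hE'C, hmem⟩, hlm⟩ := hexh τ0 h0.symm
    refine ⟨E', hE'C, ?_⟩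
    rw [← Set.nonempty_iff_ne_empty] at hlm ⊢
    obtain ⟨⟨α, β⟩, hab⟩ := hlm
    have hab' : (α, β) ∈ Λ.lmin t.1 (Λ.comp μ τ hτ) := by
      rw [ht1]
      exact lmin_extend Λ μ τ0 τ h0 hτ α β hab
    obtain ⟨hl1, hl2, hcomp, hdeg⟩ := hab'
    have htE' : (t.1, (1 : G), t.1) ∈ E := by
      have hts : (t.1, (1 : G), t.1) = t := by
        rw [Prod.ext_iff, Prod.ext_iff]
        exact ⟨rfl, hdiag.2.symm, hdiag.1⟩
      rw [hts]; exact htE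
    refine ⟨_, t.1, 1, t.1, Λ.comp μ τ hτ, 1, Λ.comp μ τ hτ, α, β, htE', hmem,
      ⟨hl1, hl2, hcomp, hdeg⟩, ?_, ?_, rfl⟩
    · rw [SS.act_one]; exact hl1
    · rw [inv_one, SS.act_one]; exact hl2
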